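/- Let n ≥ 2 and let f_0,…,f_n be vectors in ℝ^{n+1}, each belonging to the root system A_n = {e_i − e_j : 0 ≤ i ≠ j ≤ n}. Suppose that any n of the vectors f_0,…,f_n are linearly independent, while all n+1 of them are linearly dependent. Then there exists a permutation σ of {0,1,…,n} such that, as sets, {f_0, −f_0, f_1, −f_1, …, f_n, −f_n} = {±(e_{σ(m)} − e_{σ(m+1 mod n+1)}) : m = 0,…,n}. That is, the configuration is exactly that of the Coxeter simplex of type Ã_n, whose graph is a cycle on n+1 nodes. -/

import Mathlib

noncomputable section

/-- The standard basis vector `e i` of `ℝ^{n+1}`. -/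
def stdBasis (n : ℕ) (i : Fin (n + 1)) : EuclideanSpace ℝ (Fin (n + 1)) :=
  EuclideanSpace.single i 1

set_option maxHeartbeats 1000000 in
/-- If `f 0, …, f n` are roots of the root system `Aₙ = {eᵢ - eⱼ : i ≠ j}` in
`ℝ^{n+1}` such that any `n` of them are linearly independent while all `n + 1` of them are
linearly dependent, then up to signs and a permutation `σ` they form the cyclic configuration
`±(e_{σ(m)} - e_{σ(m+1 mod n+1)})`, i.e. the configuration of the Coxeter simplex `Ãₙ`. -/
theorem family_An {n : ℕ} (hn : 2 ≤ n) (f : Fin (n + 1) → EuclideanSpace ℝ (Fin (n + 1)))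
    (hroot : ∀ k, ∃ i j : Fin (n + 1), i ≠ j ∧ f k = stdBasis n i - stdBasis n j)
    (hind : ∀ k : Fin (n + 1),
      LinearIndependent ℝ (fun m : {m : Fin (n + 1) // m ≠ k} => f (m : Fin (n + 1))))
    (hdep : ¬ LinearIndependent ℝ f) :
    ∃ σ : Equiv.Perm (Fin (n + 1)),
      {v : EuclideanSpace ℝ (Fin (n + 1)) | ∃ k, v = f k ∨ v = -f k} =
        {v : EuclideanSpace ℝ (Fin (n + 1)) | ∃ m : Fin (n + 1),
          v = stdBasis n (σ m) - stdBasis n (σ (m + 1)) ∨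
          v = -(stdBasis n (σ m) - stdBasis n (σ (m + 1)))} := by
  classical
  have haux : ∀ c : Fin (n+1) → ℝ, ∑ k, c k • f k = 0 → ∀ k₀, c k₀ = 0 → ∀ k, c k = 0 := by
    intro c hc k₀ hk₀ k
    by_cases hkk : k = k₀
    · rw [hkk]; exact hk₀
    refine Fintype.linearIndependent_iff.1 (hind k₀) (fun m => c m) ?_ ⟨k, hkk⟩
    rw [← Finset.sum_subtype (Finset.univ.erase k₀) (by simp) (fun m => c m • f m),
      Finset.sum_erase _ (by simp [hk₀]), hc]
  obtain ⟨c, hc0, k₂, hck₂⟩ := Fintype.not_linearIndependent_iff.1 hdep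
  have hcne : ∀ k, c k ≠ 0 := fun k hk => hck₂ (haux c hc0 k hk k₂)
  classical
  choose A B hABne hfAB using hroot
  set a : Fin (n+1) → Fin (n+1) := fun k => if 0 < c k then A k else B k with ha
  set b : Fin (n+1) → Fin (n+1) := fun k => if 0 < c k then B k else A k with hb
  set s : Fin (n+1) → ℝ := fun k => if 0 < c k then 1 else -1 with hs
  set g : Fin (n+1) → EuclideanSpace ℝ (Fin (n+1)) :=
    fun k => stdBasis n (a k) - stdBasis n (b k) with hg
  have hab : ∀ k, a k ≠ b k := by
    intro k; by_cases h : 0 < c k <;> simp [ha, hb, h, hABne k, (hABne k).symm]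
  have hgf : ∀ k, g k = s k • f k := by
    intro k; by_cases h : 0 < c k <;>
      simp [hg, ha, hb, hs, h, hfAB k, neg_sub]
  have hdpos : ∀ k, 0 < |c k| := fun k => abs_pos.2 (hcne k)
  have hds : ∀ k, |c k| • g k = c k • f k := by
    intro k
    by_cases h : 0 < c k
    · rw [hgf k, hs]; simp [h, abs_of_pos h]
    · rw [hgf k, hs]
      have h' : c k < 0 := lt_of_le_of_ne (not_lt.1 h) (hcne k)
      simp only [h, if_false, smul_smul, abs_of_neg h']
      ring_nf
  have hsum : ∑ k, |c k| • g k = 0 := by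
    rw [← hc0]; exact Finset.sum_congr rfl fun k _ => hds k
  -- coordinate equations
  have hcoord : ∀ i, ∑ k ∈ Finset.univ.filter (fun k => a k = i), |c k|
      = ∑ k ∈ Finset.univ.filter (fun k => b k = i), |c k| := by
    intro i
    have h1 : (∑ k, |c k| • g k) i = 0 := by rw [hsum]; rfl
    have h2 : (∑ k, |c k| • g k) i = ∑ k, |c k| * ((g k) i) := by
      rw [WithLp.ofLp_sum, Finset.sum_apply]; rfl
    have h3 : ∀ k, (g k) i = (if a k = i then (1:ℝ) else 0) - (if b k = i then 1 else 0) := by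
      intro k
      simp [hg, stdBasis, EuclideanSpace.single_apply, eq_comm]
    rw [h2] at h1
    simp only [h3, mul_sub, mul_ite, mul_one, mul_zero, Finset.sum_sub_distrib] at h1
    rw [sub_eq_zero] at h1
    simpa [Finset.sum_filter] using h1
  -- ranges agree
  have hposiff : ∀ (u : Fin (n+1) → Fin (n+1)) (i : Fin (n+1)),
      (0 < ∑ k ∈ Finset.univ.filter (fun k => u k = i), |c k|) ↔ ∃ k, u k = i := by
    intro u i
    constructor
    · intro h
      by_contra hno
      push_neg at hno
      rw [Finset.sum_eq_zero (by simp_all)] at h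
      · exact lt_irrefl 0 h
    · rintro ⟨k, hk⟩
      exact Finset.sum_pos (fun m _ => hdpos m) ⟨k, by simp [hk]⟩
  have hrange : ∀ i, (∃ k, a k = i) ↔ ∃ k, b k = i := by
    intro i
    rw [← hposiff a i, ← hposiff b i, hcoord i]
  have hgind : ∀ k₀, LinearIndependent ℝ (fun m : {m : Fin (n+1) // m ≠ k₀} => g (m : Fin (n+1))) := by
    intro k₀
    have hu := (hind k₀).units_smul (fun m => if 0 < c (m : Fin (n+1)) then 1 else -1)
    convert hu using 1
    funext m
    by_cases h : 0 < c (m : Fin (n+1)) <;>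
      simp [hgf, hs, h, Pi.smul_apply', Units.smul_def]
  have hasurj : ∀ i : Fin (n+1), ∃ k, a k = i := by
    intro i
    by_contra hia
    have hib : ¬ ∃ k, b k = i := by rw [← hrange]; exact hia
    push_neg at hia hib
    have hnt : Nontrivial (Fin (n+1)) := Fin.nontrivial_iff_two_le.mpr (by omega)
    obtain ⟨j₀, hj₀⟩ := exists_ne i
    set S : Finset (EuclideanSpace ℝ (Fin (n+1))) :=
      ({i, j₀}ᶜ : Finset (Fin (n+1))).image (fun j => stdBasis n j - stdBasis n j₀) with hS
    have hmem : ∀ j : Fin (n+1), j ≠ i →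
        stdBasis n j - stdBasis n j₀ ∈ Submodule.span ℝ (S : Set _) := by
      intro j hj
      by_cases hjj : j = j₀
      · simp [hjj]
      · refine Submodule.subset_span ?_
        simp only [hS, Finset.coe_image, Set.mem_image, Finset.mem_coe, Finset.mem_compl,
          Finset.mem_insert, Finset.mem_singleton]
        exact ⟨j, by tauto, rfl⟩
    have hspan : ∀ k, g k ∈ Submodule.span ℝ (S : Set _) := by
      intro k
      have hgrw : g k = (stdBasis n (a k) - stdBasis n j₀) - (stdBasis n (b k) - stdBasis n j₀) := by
        rw [hg]; abel
      rw [hgrw]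
      exact sub_mem (hmem _ (hia k)) (hmem _ (hib k))
    have hle : Submodule.span ℝ (Set.range (fun m : {m : Fin (n+1) // m ≠ 0} => g (m : Fin (n+1))))
        ≤ Submodule.span ℝ (S : Set _) :=
      Submodule.span_le.2 (by rintro v ⟨m, rfl⟩; exact hspan m)
    have h1 : Module.finrank ℝ
        (Submodule.span ℝ (Set.range (fun m : {m : Fin (n+1) // m ≠ 0} => g (m : Fin (n+1))))) = n := by
      rw [finrank_span_eq_card (hgind 0)]
      simp [Fintype.card_subtype_compl]
    have h2 : Module.finrank ℝ
        (Submodule.span ℝ (S : Set (EuclideanSpace ℝ (Fin (n+1))))) ≤ n - 1 := by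
      have h2a : (S : Set (EuclideanSpace ℝ (Fin (n+1)))).finrank ℝ ≤ S.card :=
        finrank_span_finset_le_card S
      refine le_trans h2a (le_trans Finset.card_image_le ?_)
      rw [Finset.card_compl]
      have : ({i, j₀} : Finset (Fin (n+1))).card = 2 := by
        rw [Finset.card_insert_of_notMem (by simp [Ne.symm hj₀])]; simp
      simp [this]
    have hmono := Submodule.finrank_mono hle
    omega
  have hbsurj : ∀ i : Fin (n+1), ∃ k, b k = i := fun i => (hrange i).1 (hasurj i)
  have habij : Function.Bijective a :=
    Function.Surjective.bijective_of_finite (fun i => hasurj i)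
  have hbbij : Function.Bijective b :=
    Function.Surjective.bijective_of_finite (fun i => hbsurj i)
  set ea := Equiv.ofBijective a habij with hea
  set eb := Equiv.ofBijective b hbbij with heb
  set τ : Equiv.Perm (Fin (n+1)) := eb.symm.trans ea with hτdef
  have hτ : ∀ k, τ (b k) = a k := by
    intro k
    have h1 : eb.symm (b k) = k := by
      rw [Equiv.symm_apply_eq]; rfl
    simp [hτdef, h1, hea]
  have hτne : ∀ v, τ v ≠ v := by
    intro v
    obtain ⟨k, rfl⟩ := hbsurj v
    rw [hτ k]
    exact hab k
  -- the cycle through 0 is everything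
  set C : Finset (Fin (n+1)) := Finset.univ.filter (fun v => Equiv.Perm.SameCycle τ 0 v) with hC
  have h0C : (0 : Fin (n+1)) ∈ C := by
    simp only [hC, Finset.mem_filter, Finset.mem_univ, true_and]
    exact Equiv.Perm.SameCycle.refl τ 0
  have hτC : ∀ v ∈ C, τ v ∈ C := by
    intro v hv
    simp only [hC, Finset.mem_filter, Finset.mem_univ, true_and] at hv ⊢
    exact hv.trans ⟨1, by simp⟩
  have hCim : C.image τ = C := by
    apply Finset.eq_of_subset_of_card_le
    · intro w hw
      obtain ⟨v, hv, rfl⟩ := Finset.mem_image.1 hw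
      exact hτC v hv
    · rw [Finset.card_image_of_injective _ τ.injective]
  have hCuniv : C = Finset.univ := by
    by_contra hne
    obtain ⟨i, hiC⟩ : ∃ i, i ∉ C := by
      by_contra hall
      push_neg at hall
      exact hne (Finset.eq_univ_iff_forall.2 hall)
    obtain ⟨k₀, hk₀⟩ := hbsurj i
    -- ∑_{v ∈ C} (e_{τ v} - e_v) = 0
    have hzero : ∑ v ∈ C, (stdBasis n (τ v) - stdBasis n v) = 0 := by
      rw [Finset.sum_sub_distrib, sub_eq_zero]
      conv_rhs => rw [← hCim]
      rw [Finset.sum_image (fun x _ y _ h => τ.injective h)]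
    -- translate to a dependence among the g's via the bijection b
    have hsum2 : ∑ k, (if b k ∈ C then (1:ℝ) else 0) • g k = 0 := by
      rw [← hzero]
      simp only [ite_smul, one_smul, zero_smul, ← Finset.sum_filter]
      refine Finset.sum_nbij' (i := fun k => b k) (j := fun v => eb.symm v) ?_ ?_ ?_ ?_ ?_
      · intro k hk
        simpa using (Finset.mem_filter.1 hk).2
      · intro v hv
        simp only [Finset.mem_filter, Finset.mem_univ, true_and]
        have hbv : b (eb.symm v) = v := Equiv.apply_symm_apply eb v
        rw [hbv]; exact hv
      · intro k hk
        have : eb.symm (b k) = k := by rw [Equiv.symm_apply_eq]; rfl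
        exact this
      · intro v hv
        exact Equiv.apply_symm_apply eb v
      · intro k hk
        rw [hg, hτ k]
    have hc' : ∑ k, ((if b k ∈ C then (1:ℝ) else 0) * s k) • f k = 0 := by
      rw [← hsum2]
      refine Finset.sum_congr rfl fun k _ => ?_
      rw [mul_smul, ← hgf k]
    obtain ⟨k₁, hk₁⟩ := hbsurj 0
    have hz : (if b k₀ ∈ C then (1:ℝ) else 0) * s k₀ = 0 := by
      rw [hk₀, if_neg hiC, zero_mul]
    have hall := haux _ hc' k₀ hz k₁
    rw [hk₁, if_pos h0C, one_mul] at hall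
    rw [hs] at hall
    by_cases hp : 0 < c k₁ <;> simp [hp] at hall
  have hsame : ∀ x y : Fin (n+1), Equiv.Perm.SameCycle τ x y := by
    have h0 : ∀ x, Equiv.Perm.SameCycle τ 0 x := by
      intro x
      have := Finset.eq_univ_iff_forall.1 hCuniv x
      simpa [hC] using this
    intro x y
    exact (h0 x).symm.trans (h0 y)
  have hcyc : τ.IsCycleOn (Finset.univ : Finset (Fin (n+1))) := by
    constructor
    · rw [Finset.coe_univ]
      exact τ.bijective.bijOn_univ
    · intro x _ y _
      exact hsame x y
  have hcard : (Finset.univ : Finset (Fin (n+1))).card = n+1 := by simp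
  set σ₀ : Fin (n+1) → Fin (n+1) := fun m => (τ ^ (m : ℕ)) 0 with hσ₀
  have hinj : Function.Injective σ₀ := by
    intro m m' h
    have hmod := (hcyc.pow_apply_eq_pow_apply (Finset.mem_univ 0)).1 h
    rw [hcard] at hmod
    have h2 : (m:ℕ) % (n+1) = (m':ℕ) % (n+1) := hmod
    exact Fin.ext (by rwa [Nat.mod_eq_of_lt m.isLt, Nat.mod_eq_of_lt m'.isLt] at h2)
  set σ := Equiv.ofBijective σ₀ (Function.Injective.bijective_of_finite hinj) with hσdef
  have hστ : ∀ m : Fin (n+1), σ (m+1) = τ (σ m) := by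
    intro m
    have hτpow : ∀ t : ℕ, (τ ^ (t+1)) 0 = τ ((τ ^ t) 0) := by
      intro t
      rw [pow_succ']
      rfl
    by_cases hm : (m:ℕ) < n
    · have h1 : ((m+1 : Fin (n+1)) : ℕ) = (m:ℕ)+1 :=
        Fin.val_add_one_of_lt (by rw [Fin.lt_iff_val_lt_val, Fin.val_last]; exact hm)
      show (τ ^ ((m+1 : Fin (n+1)) : ℕ)) 0 = τ ((τ ^ (m:ℕ)) 0)
      rw [h1, hτpow]
    · have hm' : m = Fin.last n := by
        have := m.isLt
        apply Fin.ext
        rw [Fin.val_last]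
        omega
      have hpow := hcyc.pow_card_apply (Finset.mem_univ 0)
      rw [hcard] at hpow
      show (τ ^ ((m+1 : Fin (n+1)) : ℕ)) 0 = τ ((τ ^ (m:ℕ)) 0)
      rw [hm', Fin.last_add_one]
      simp only [Fin.val_zero, pow_zero, Fin.val_last]
      rw [← hτpow, hpow]
      rfl
  have hpm : ∀ k (v : EuclideanSpace ℝ (Fin (n+1))),
      (v = f k ∨ v = -f k) ↔ (v = g k ∨ v = -g k) := by
    intro k v
    by_cases h : 0 < c k
    · have hsk : g k = f k := by rw [hgf k, hs]; simp [h]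
      rw [hsk]
    · have hsk : g k = -f k := by rw [hgf k, hs]; simp [h]
      rw [hsk, neg_neg]
      exact or_comm
  have hneg : ∀ k m, σ m = b k → stdBasis n (σ m) - stdBasis n (σ (m+1)) = -g k := by
    intro k m hm
    rw [hστ, hm, hτ k, hg]
    exact (neg_sub _ _).symm
  refine ⟨σ, ?_⟩
  ext v
  simp only [Set.mem_setOf_eq]
  constructor
  · rintro ⟨k, hv⟩
    rw [hpm k v] at hv
    refine ⟨σ.symm (b k), ?_⟩
    rw [hneg k _ (Equiv.apply_symm_apply σ (b k)), neg_neg]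
    exact hv.symm
  · rintro ⟨m, hv⟩
    obtain ⟨k, hk⟩ := hbsurj (σ m)
    refine ⟨k, ?_⟩
    rw [hpm k v]
    rw [hneg k m hk.symm, neg_neg] at hv
    exact hv.symm
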